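/- Let m be an integer with |m| ≥ 3 and let L = [[m, -1], [1, 0]] in SL(2,ℤ). If K ∈ SL(2,ℤ) commutes with L, then K = L^n or K = -L^n for some integer n. -/

import Mathlib

open Matrix

private lemma aux_descent (m : ℤ) (L : Matrix.SpecialLinearGroup (Fin 2) ℤ)
    (hL : (L : Matrix (Fin 2) (Fin 2) ℤ) = !![m, -1; 1, 0]) :
    ∀ N : ℕ, ∀ x y : ℤ, x.natAbs + y.natAbs ≤ N → x ^ 2 + m * x * y + y ^ 2 = 1 →
      ∃ n : ℤ, (!![x + m * y, -y; y, x] : Matrix (Fin 2) (Fin 2) ℤ)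
          = ((L ^ n : Matrix.SpecialLinearGroup (Fin 2) ℤ) : Matrix (Fin 2) (Fin 2) ℤ)
        ∨ (!![x + m * y, -y; y, x] : Matrix (Fin 2) (Fin 2) ℤ)
          = -((L ^ n : Matrix.SpecialLinearGroup (Fin 2) ℤ) : Matrix (Fin 2) (Fin 2) ℤ) := by
  have hdet : ((!![0, 1; -1, m] : Matrix (Fin 2) (Fin 2) ℤ)).det = 1 := by
    simp [Matrix.det_fin_two]
  set Li : Matrix.SpecialLinearGroup (Fin 2) ℤ := ⟨!![0, 1; -1, m], hdet⟩ with hLi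
  have hLinv : ((L⁻¹ : Matrix.SpecialLinearGroup (Fin 2) ℤ) : Matrix (Fin 2) (Fin 2) ℤ)
      = !![0, 1; -1, m] := by
    have hmul : L * Li = 1 := by
      apply Subtype.ext
      show (L : Matrix (Fin 2) (Fin 2) ℤ) * !![0, 1; -1, m] = 1
      rw [hL]
      ext i j
      fin_cases i <;> fin_cases j <;>
        simp [Matrix.mul_apply, Fin.sum_univ_succ, Matrix.one_apply]
    rw [inv_eq_of_mul_eq_one_right hmul]
  intro N
  induction N with
  | zero =>
      intro x y hxy heq
      have hx : x = 0 := by omega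
      have hy : y = 0 := by omega
      rw [hx, hy] at heq; norm_num at heq
  | succ N ih =>
      intro x y hxy heq
      by_cases hy : y = 0
      · subst hy
        have hx2 : x ^ 2 = 1 := by linarith [heq]
        have hx : x = 1 ∨ x = -1 := by
          rcases Int.isUnit_iff.mp (IsUnit.of_mul_eq_one (a := x) x (by nlinarith)) with h | h
          · exact Or.inl h
          · exact Or.inr h
        refine ⟨0, ?_⟩
        rw [zpow_zero]
        rcases hx with h | h <;> subst h
        · left
          norm_num [Matrix.SpecialLinearGroup.coe_one]
          exact Matrix.one_fin_two.symm
        · right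
          norm_num [Matrix.SpecialLinearGroup.coe_one, Matrix.one_fin_two]
          ext i j
          fin_cases i <;> fin_cases j <;> simp
      by_cases hx : x = 0
      · subst hx
        have hy2 : y ^ 2 = 1 := by linarith [heq]
        have hy' : y = 1 ∨ y = -1 := by
          rcases Int.isUnit_iff.mp (IsUnit.of_mul_eq_one (a := y) y (by nlinarith)) with h | h
          · exact Or.inl h
          · exact Or.inr h
        refine ⟨1, ?_⟩
        rw [zpow_one, hL]
        rcases hy' with h | h <;> subst h
        · left; norm_num
        · right
          ext i j
          fin_cases i <;> fin_cases j <;> simp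
      -- both x and y nonzero
      have hx1 : (1 : ℤ) ≤ |x| := Int.one_le_abs hx
      have hy1 : (1 : ℤ) ≤ |y| := Int.one_le_abs hy
      by_cases hba : |y| ≤ |x|
      · -- reduce: new pair (-y, x + m*y)
        have hprod : x * (x + m * y) = 1 - y ^ 2 := by linear_combination heq
        have habs : |x| * |x + m * y| = y ^ 2 - 1 := by
          rw [← abs_mul, hprod, abs_of_nonpos (by nlinarith [sq_abs y])]
          ring
        have hlt : |x + m * y| < |x| := by
          have h1 : |x| * |x + m * y| < |x| * |x| := by
            have hyx : y ^ 2 ≤ x ^ 2 := by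
              nlinarith [sq_abs x, sq_abs y, abs_nonneg y]
            nlinarith [sq_abs x]
          exact lt_of_mul_lt_mul_left h1 (abs_nonneg x)
        have hnormnew : (-y) ^ 2 + m * (-y) * (x + m * y) + (x + m * y) ^ 2 = 1 := by
          linear_combination heq
        have hsum : (-y).natAbs + (x + m * y).natAbs ≤ N := by
          rw [Int.abs_eq_natAbs, Int.abs_eq_natAbs] at hlt
          simp only [Int.natAbs_neg]
          omega
        obtain ⟨n, hn⟩ := ih (-y) (x + m * y) hsum hnormnew
        refine ⟨n - 1, ?_⟩
        have hzpow : ((L ^ (n - 1) : Matrix.SpecialLinearGroup (Fin 2) ℤ)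
            : Matrix (Fin 2) (Fin 2) ℤ)
            = ((L ^ n : Matrix.SpecialLinearGroup (Fin 2) ℤ) : Matrix (Fin 2) (Fin 2) ℤ)
              * !![0, 1; -1, m] := by
          rw [← hLinv, ← Matrix.SpecialLinearGroup.coe_mul, ← _root_.zpow_sub_one]
        have hkey : (!![x + m * y, -y; y, x] : Matrix (Fin 2) (Fin 2) ℤ)
            = (!![(-y) + m * (x + m * y), -(x + m * y); x + m * y, -y]
                : Matrix (Fin 2) (Fin 2) ℤ) * !![0, 1; -1, m] := by
          ext i j
          fin_cases i <;> fin_cases j <;>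
            simp [Matrix.mul_apply, Fin.sum_univ_succ] <;> ring
        rcases hn with hn | hn
        · left; rw [hkey, hn, hzpow]
        · right; rw [hkey, hn, hzpow, Matrix.neg_mul]
      · -- |x| < |y| : reduce: new pair (x*m + y, -x)
        push_neg at hba
        have hprod : y * (x * m + y) = 1 - x ^ 2 := by linear_combination heq
        have habs : |y| * |x * m + y| = x ^ 2 - 1 := by
          rw [← abs_mul, hprod, abs_of_nonpos (by nlinarith [sq_abs x])]
          ring
        have hlt : |x * m + y| < |y| := by
          have h1 : |y| * |x * m + y| < |y| * |y| := by
            have hyx : x ^ 2 < y ^ 2 := by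
              nlinarith [sq_abs x, sq_abs y, abs_nonneg x]
            nlinarith [sq_abs y]
          exact lt_of_mul_lt_mul_left h1 (abs_nonneg y)
        have hnormnew : (x * m + y) ^ 2 + m * (x * m + y) * (-x) + (-x) ^ 2 = 1 := by
          linear_combination heq
        have hsum : (x * m + y).natAbs + (-x).natAbs ≤ N := by
          rw [Int.abs_eq_natAbs, Int.abs_eq_natAbs] at hlt
          simp only [Int.natAbs_neg]
          omega
        obtain ⟨n, hn⟩ := ih (x * m + y) (-x) hsum hnormnew
        refine ⟨n + 1, ?_⟩
        have hzpow : ((L ^ (n + 1) : Matrix.SpecialLinearGroup (Fin 2) ℤ)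
            : Matrix (Fin 2) (Fin 2) ℤ)
            = ((L ^ n : Matrix.SpecialLinearGroup (Fin 2) ℤ) : Matrix (Fin 2) (Fin 2) ℤ)
              * !![m, -1; 1, 0] := by
          rw [← hL, ← Matrix.SpecialLinearGroup.coe_mul, ← _root_.zpow_add_one]
        have hkey : (!![x + m * y, -y; y, x] : Matrix (Fin 2) (Fin 2) ℤ)
            = (!![(x * m + y) + m * (-x), -(-x); -x, x * m + y]
                : Matrix (Fin 2) (Fin 2) ℤ) * !![m, -1; 1, 0] := by
          ext i j
          fin_cases i <;> fin_cases j <;>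
            simp [Matrix.mul_apply, Fin.sum_univ_succ] <;> ring
        rcases hn with hn | hn
        · left; rw [hkey, hn, hzpow]
        · right; rw [hkey, hn, hzpow, Matrix.neg_mul]

theorem stmt_0 (m : ℤ) (hm : 3 ≤ |m|)
    (L K : Matrix.SpecialLinearGroup (Fin 2) ℤ)
    (hL : (L : Matrix (Fin 2) (Fin 2) ℤ) = !![m, -1; 1, 0])
    (hcomm : K * L = L * K) :
    ∃ n : ℤ, (K : Matrix (Fin 2) (Fin 2) ℤ) = ((L ^ n : Matrix.SpecialLinearGroup (Fin 2) ℤ) : Matrix (Fin 2) (Fin 2) ℤ)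
      ∨ (K : Matrix (Fin 2) (Fin 2) ℤ) = -((L ^ n : Matrix.SpecialLinearGroup (Fin 2) ℤ) : Matrix (Fin 2) (Fin 2) ℤ) := by
  set A : Matrix (Fin 2) (Fin 2) ℤ := (K : Matrix (Fin 2) (Fin 2) ℤ) with hA
  have hc : A * !![m, -1; 1, 0] = !![m, -1; 1, 0] * A := by
    have := congrArg (fun X : Matrix.SpecialLinearGroup (Fin 2) ℤ =>
      (X : Matrix (Fin 2) (Fin 2) ℤ)) hcomm
    simpa [Matrix.SpecialLinearGroup.coe_mul, hL, hA] using this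
  have h10 : A 1 0 = -A 0 1 := by
    have := congrFun (congrFun hc 0) 0
    simp [Matrix.mul_apply, Fin.sum_univ_succ] at this
    linarith
  have h00 : A 0 0 = A 1 1 - m * A 0 1 := by
    have := congrFun (congrFun hc 0) 1
    simp [Matrix.mul_apply, Fin.sum_univ_succ] at this
    linarith
  have hdet : A 0 0 * A 1 1 - A 0 1 * A 1 0 = 1 := by
    have h := K.property
    rw [show Matrix.det (K : Matrix (Fin 2) (Fin 2) ℤ) = A.det by rw [hA]] at h
    rw [Matrix.det_fin_two] at h
    linarith
  have hnorm : (A 1 1) ^ 2 + m * (A 1 1) * (-A 0 1) + (-A 0 1) ^ 2 = 1 := by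
    linear_combination hdet - A 1 1 * h00 + A 0 1 * h10
  obtain ⟨n, hn⟩ := aux_descent m L hL ((A 1 1).natAbs + (-A 0 1).natAbs)
    (A 1 1) (-A 0 1) le_rfl hnorm
  have hAeq : A = !![A 1 1 + m * (-A 0 1), -(-A 0 1); -A 0 1, A 1 1] := by
    rw [Matrix.eta_fin_two A]
    ext i j
    fin_cases i <;> fin_cases j <;> simp <;> linarith
  exact ⟨n, by rw [hAeq]; exact hn⟩
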